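/- Correctness of the orthogonal vector computation: given the triangular basis output (av_i, b_i) of Algorithm 1 with associated basis vectors β_i = 0^{i−1} ∥ (1−av_i) ∥ b_i, Algorithm 2 (for i from n down to 1: out[i] ← av_i + Σ_{j>i} out[j]·b_i[j] mod 2) produces a vector out ∈ (ZMod 2)^n orthogonal to every β_i, i.e., β_i · out = 0 for all i. -/

import Mathlib

/-- State of the triangular-basis algorithm (Algorithm 1). -/
structure AlgState (n m : ℕ) where
  x : Fin m → Fin n → ZMod 2
  used : Fin m → ZMod 2
  av : Fin n → ZMod 2
  b : Fin n → Fin n → ZMod 2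

/-- One iteration `(i, j)` of Algorithm 1:
`used_j += x_j[i] ∧ av_i`; `av_i += x_j[i] ∧ used_j`;
if `used_j` then `b_i[(i+1)..n] += x_j[(i+1)..n]`;
if `x_j[i]` then `x_j[(i+1)..n] += b_i[(i+1)..n]` (all mod 2). -/
def algStep {n m : ℕ} (i : Fin n) (j : Fin m) (s : AlgState n m) : AlgState n m :=
  let used' : ZMod 2 := s.used j + s.x j i * s.av i
  let av' : ZMod 2 := s.av i + s.x j i * used'
  let b' : Fin n → ZMod 2 := fun k => s.b i k + (if i < k then used' * s.x j k else 0)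
  let x' : Fin n → ZMod 2 := fun k => s.x j k + (if i < k then s.x j i * b' k else 0)
  { x := Function.update s.x j x'
    used := Function.update s.used j used'
    av := Function.update s.av i av'
    b := Function.update s.b i b' }

/-- Run a list of iterations in order. -/
def algRun {n m : ℕ} (L : List (Fin n × Fin m)) (s : AlgState n m) : AlgState n m :=
  L.foldl (fun s p => algStep p.1 p.2 s) s

/-- All iterations in the standard order: outer loop over `i`, inner loop over `j`. -/
def allIters (n m : ℕ) : List (Fin n × Fin m) :=
  (List.finRange n).flatMap fun i => (List.finRange m).map fun j => (i, j)

/-- Initial state: input vectors `x0`, `used = 0`, `av = 1`, `b = 0`. -/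
def initState {n m : ℕ} (x0 : Fin m → Fin n → ZMod 2) : AlgState n m :=
  { x := x0, used := fun _ => 0, av := fun _ => 1, b := fun _ _ => 0 }

/-- The triangular basis vectors `β_i = 0^{i-1} ∥ (1 - av_i) ∥ b_i[(i+1)..n]`. -/
def basisVec {n m : ℕ} (s : AlgState n m) : Fin n → Fin n → ZMod 2 :=
  fun i k => if k < i then 0 else if k = i then 1 - s.av i else s.b i k


section AuxOrth
variable {n m : ℕ}

/-- The inductive invariant: (A) `av·b = 0` everywhere, (B) any *pending* pair `(i,j)`
with `used j = 1` has `x j i = 0`. -/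
def AlgInv (s : AlgState n m) (P : Fin n × Fin m → Prop) : Prop :=
  (∀ i k, s.av i * s.b i k = 0) ∧ (∀ i j, P (i, j) → s.used j = 1 → s.x j i = 0)

lemma algInv_mono {s : AlgState n m} {P Q : Fin n × Fin m → Prop}
    (h : ∀ p, Q p → P p) (hI : AlgInv s P) : AlgInv s Q :=
  ⟨hI.1, fun i j hq => hI.2 i j (h _ hq)⟩

lemma zmod2_cases : ∀ z : ZMod 2, z = 0 ∨ z = 1 := by decide

lemma algInv_step {s : AlgState n m} {P Q : Fin n × Fin m → Prop}
    (r : Fin n) (j : Fin m) (hInv : AlgInv s P) (hPr : P (r, j))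
    (hcol : ∀ k, r < k → P (k, j))
    (hQ : ∀ p, Q p → P p ∧ (p.2 = j → r < p.1)) :
    AlgInv (algStep r j s) Q := by
  obtain ⟨hA, hB⟩ := hInv
  constructor
  · intro i k
    by_cases hi : i = r
    · subst hi
      simp only [algStep, Function.update_self]
      rcases zmod2_cases (s.used j) with hu | hu
      · rcases zmod2_cases (s.x j i) with hx | hx
        · simp [hu, hx, hA]
        · rcases zmod2_cases (s.av i) with ha | ha
          · simp [hu, hx, ha]
          · have h2 : (1 + 1 : ZMod 2) = 0 := by decide
            simp [hu, hx, ha, h2]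
      · have hx : s.x j i = 0 := hB i j hPr hu
        simp only [hu, hx, zero_mul, add_zero, one_mul, mul_zero]
        by_cases hk : i < k
        · have hxk : s.x j k = 0 := hB k j (hcol k hk) hu
          simp [hk, hxk, hA]
        · simp [hk, hA]
    · simp only [algStep, Function.update_of_ne hi]
      exact hA i k
  · intro i' j' hQp hu'
    obtain ⟨hPp, hord⟩ := hQ _ hQp
    by_cases hj : j' = j
    · subst hj
      have hir : r < i' := hord rfl
      simp only [algStep, Function.update_self] at hu' ⊢
      rcases zmod2_cases (s.used j') with hu | hu
      · rcases zmod2_cases (s.x j' r) with hx | hx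
        · simp [hx, hu] at hu'
        · rcases zmod2_cases (s.av r) with ha | ha
          · simp [hx, hu, ha] at hu'
          · have hb : s.b r i' = 0 := by
              have := hA r i'; rw [ha, one_mul] at this; exact this
            have h2 : ∀ z : ZMod 2, z + z = 0 := by decide
            simp [hx, hu, ha, hb, hir, h2]
      · have hx : s.x j' r = 0 := hB r j' hPr hu
        have hxi : s.x j' i' = 0 := hB i' j' hPp hu
        simp [hx, hxi, hir]
    · simp only [algStep, Function.update_of_ne hj] at hu' ⊢
      exact hB i' j' hPp hu'

lemma algInv_inner (i : Fin n) (R : Fin n → Prop)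
    (hup : ∀ k, i < k → R k) (hlt : ∀ k, R k → i < k) :
    ∀ (cols : List (Fin m)), cols.Nodup → ∀ (s : AlgState n m),
      AlgInv s (fun p => (p.1 = i ∧ p.2 ∈ cols) ∨ R p.1) →
      AlgInv (algRun (cols.map fun j => (i, j)) s) (fun p => R p.1) := by
  intro cols
  induction cols with
  | nil =>
      intro _ s hI
      simpa [algRun] using algInv_mono (fun p hp => Or.inr hp) hI
  | cons j ctail ih =>
      intro hnd s hI
      have hnd' : ctail.Nodup := (List.nodup_cons.mp hnd).2
      have hjn : j ∉ ctail := (List.nodup_cons.mp hnd).1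
      have hstep : AlgInv (algStep i j s)
          (fun p => (p.1 = i ∧ p.2 ∈ ctail) ∨ R p.1) := by
        refine algInv_step i j hI (Or.inl ⟨rfl, List.mem_cons_self⟩)
          (fun k hk => Or.inr (hup k hk)) ?_
        rintro p (⟨h1, h2⟩ | hR)
        · refine ⟨Or.inl ⟨h1, List.mem_cons_of_mem _ h2⟩, fun hpj => ?_⟩
          exact absurd (hpj ▸ h2) hjn
        · exact ⟨Or.inr hR, fun _ => hlt _ hR⟩
      have := ih hnd' (algStep i j s) hstep
      simpa [algRun] using this

lemma algInv_outer :
    ∀ (rows : List (Fin n)), (∀ i ∈ rows, ∀ k, i < k → k ∈ rows) →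
      rows.Pairwise (· < ·) → ∀ (s : AlgState n m),
      AlgInv s (fun p => p.1 ∈ rows) →
      AlgInv (algRun (rows.flatMap fun i => (List.finRange m).map fun j => (i, j)) s)
        (fun _ => False) := by
  intro rows
  induction rows with
  | nil =>
      intro _ _ s hI
      simpa [algRun] using algInv_mono (fun p hp => hp.elim) hI
  | cons i rest ih =>
      intro hup hsort s hI
      have hlt : ∀ k, k ∈ rest → i < k := fun k hk =>
        (List.pairwise_cons.mp hsort).1 k hk
      have hup' : ∀ k, i < k → k ∈ rest := by
        intro k hk
        rcases List.mem_cons.mp (hup i (List.mem_cons_self) k hk) with h | h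
        · exact absurd h (ne_of_gt hk)
        · exact h
      have h1 : AlgInv (algRun ((List.finRange m).map fun j => (i, j)) s)
          (fun p => p.1 ∈ rest) := by
        refine algInv_inner i (fun k => k ∈ rest) hup' hlt
          (List.finRange m) (List.nodup_finRange m) s ?_
        refine algInv_mono ?_ hI
        rintro p (⟨h1, _⟩ | hR)
        · exact h1 ▸ List.mem_cons_self
        · exact List.mem_cons_of_mem _ hR
      have hup2 : ∀ i' ∈ rest, ∀ k, i' < k → k ∈ rest := by
        intro i' hi' k hk
        rcases List.mem_cons.mp (hup i' (List.mem_cons_of_mem _ hi') k hk) with h | h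
        · subst h; exact absurd hk (not_lt_of_gt (hlt i' hi'))
        · exact h
      have := ih hup2 (List.pairwise_cons.mp hsort).2 _ h1
      simpa [algRun, List.flatMap_cons, List.foldl_append] using this

lemma algInv_final (x0 : Fin m → Fin n → ZMod 2) :
    ∀ i k, (algRun (allIters n m) (initState x0)).av i *
      (algRun (allIters n m) (initState x0)).b i k = 0 := by
  have h0 : AlgInv (initState x0) (fun p : Fin n × Fin m => p.1 ∈ List.finRange n) := by
    constructor
    · intro i k; simp [initState]
    · intro i j _ h; simp [initState] at h
  have := algInv_outer (List.finRange n)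
    (fun _ _ k _ => List.mem_finRange k) (List.pairwise_lt_finRange n)
    (initState x0) h0
  exact this.1

end AuxOrth

/-- Correctness of the orthogonal-vector computation (Algorithm 2): on the output
`(av, b)` of Algorithm 1, the vector `out` defined by the downward recursion
`out[i] = av_i + Σ_{j>i} b_i[j]·out[j]` is orthogonal to every basis vector `β_i`. -/
theorem alg2_orthogonal {n m : ℕ} (x0 : Fin m → Fin n → ZMod 2)
    (out : Fin n → ZMod 2)
    (hout : ∀ i : Fin n,
      out i = (algRun (allIters n m) (initState x0)).av i +
        ∑ j ∈ Finset.univ.filter (fun j : Fin n => i < j),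
          (algRun (allIters n m) (initState x0)).b i j * out j) :
    ∀ i : Fin n,
      ∑ k, basisVec (algRun (allIters n m) (initState x0)) i k * out k = 0 := by
  intro i
  set F := algRun (allIters n m) (initState x0) with hF
  have hA : ∀ k, F.av i * F.b i k = 0 := fun k => algInv_final x0 i k
  set S : ZMod 2 := ∑ j ∈ Finset.univ.filter (fun j : Fin n => i < j), F.b i j * out j
    with hS
  have h2 : ∀ z : ZMod 2, z + z = 0 := by decide
  have hsplit : ∑ k, basisVec F i k * out k = (1 - F.av i) * out i + S := by
    rw [← Finset.add_sum_erase Finset.univ (fun k => basisVec F i k * out k)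
      (Finset.mem_univ i)]
    congr 1
    · simp [basisVec]
    · rw [hS]
      refine (Finset.sum_subset ?_ ?_).symm.trans (Finset.sum_congr rfl ?_)
      · intro k hk
        simp only [Finset.mem_filter, Finset.mem_univ, true_and] at hk
        exact Finset.mem_erase.mpr ⟨(ne_of_gt hk), Finset.mem_univ k⟩
      · intro k hk hk'
        simp only [Finset.mem_filter, Finset.mem_univ, true_and, not_lt] at hk'
        have hki : k ≠ i := (Finset.mem_erase.mp hk).1
        have : k < i := lt_of_le_of_ne hk' hki
        simp [basisVec, this]
      · intro k hk
        simp only [Finset.mem_filter, Finset.mem_univ, true_and] at hk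
        have h1 : ¬ k < i := not_lt_of_gt hk
        have h2 : k ≠ i := ne_of_gt hk
        simp [basisVec, h1, h2]
  rw [hsplit]
  rcases zmod2_cases (F.av i) with ha | ha
  · have ho : out i = S := by rw [hout i, ha, zero_add]
    rw [ha, ho, sub_zero, one_mul]
    exact h2 S
  · have hSz : S = 0 := by
      rw [hS]
      refine Finset.sum_eq_zero fun j _ => ?_
      have := hA j
      rw [ha, one_mul] at this
      rw [this, zero_mul]
    rw [ha, hSz, sub_self, zero_mul, add_zero]
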